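/- Let M be a symmetric positive definite 2×2 matrix, (e₀,e₁,e₂) a superbase of Z^2, and δᵢ := ⟨eᵢ, M eᵢ⟩. Then h(δ₀,δ₁,δ₂) ≥ det(M), with equality if and only if (e₀,e₁,e₂) is M-obtuse. -/

import Mathlib

def det2 (f g : ℤ × ℤ) : ℤ := f.1 * g.2 - f.2 * g.1

def qf (M : Matrix (Fin 2) (Fin 2) ℝ) (f g : ℤ × ℤ) : ℝ :=
  (f.1 : ℝ) * (M 0 0 * g.1 + M 0 1 * g.2) + (f.2 : ℝ) * (M 1 0 * g.1 + M 1 1 * g.2)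

def IsSuperbase (e₀ e₁ e₂ : ℤ × ℤ) : Prop := e₀ + e₁ + e₂ = 0 ∧ |det2 e₁ e₂| = 1

def IsObtuse (M : Matrix (Fin 2) (Fin 2) ℝ) (e₀ e₁ e₂ : ℤ × ℤ) : Prop :=
  qf M e₀ e₁ ≤ 0 ∧ qf M e₀ e₂ ≤ 0 ∧ qf M e₁ e₂ ≤ 0

noncomputable def hFun (a b c : ℝ) : ℝ :=
  if b + c ≤ a then b * c
  else if c + a ≤ b then c * a
  else if a + b ≤ c then a * b
  else (a * b + b * c + c * a) / 2 - (a ^ 2 + b ^ 2 + c ^ 2) / 4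

lemma qf_pos (M : Matrix (Fin 2) (Fin 2) ℝ) (hpos : M.PosDef) (f : ℤ × ℤ) (hf : f ≠ 0) :
    0 < qf M f f := by
  have hx : (![(f.1 : ℝ), (f.2 : ℝ)] : Fin 2 → ℝ) ≠ 0 := by
    intro h
    apply hf
    have h1 : (f.1 : ℝ) = 0 := congrFun h 0
    have h2 : (f.2 : ℝ) = 0 := congrFun h 1
    have : f.1 = 0 := by exact_mod_cast h1
    have : f.2 = 0 := by exact_mod_cast h2
    exact Prod.ext ‹f.1 = 0› ‹f.2 = 0›
  have h := hpos.dotProduct_mulVec_pos hx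
  have heq : qf M f f = dotProduct (star ![(f.1 : ℝ), (f.2 : ℝ)]) (M.mulVec ![(f.1 : ℝ), (f.2 : ℝ)]) := by
    simp [dotProduct, Matrix.mulVec, Fin.sum_univ_two, qf]
  rw [heq]
  exact h

set_option maxHeartbeats 1000000 in
theorem stmt7_h_superbase (M : Matrix (Fin 2) (Fin 2) ℝ)
    (hsym : M.IsSymm) (hpos : M.PosDef)
    (e₀ e₁ e₂ : ℤ × ℤ) (hsb : IsSuperbase e₀ e₁ e₂) :
    M.det ≤ hFun (qf M e₀ e₀) (qf M e₁ e₁) (qf M e₂ e₂) ∧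
      (hFun (qf M e₀ e₀) (qf M e₁ e₁) (qf M e₂ e₂) = M.det ↔ IsObtuse M e₀ e₁ e₂) := by
  obtain ⟨hsum, habs⟩ := hsb
  have hB : M 1 0 = M 0 1 := by
    have := congrFun (congrFun hsym 0) 1
    simpa [Matrix.transpose_apply] using this
  -- coordinate relations for e₀
  have h0a : (e₀.1 : ℝ) = -(e₁.1 : ℝ) - (e₂.1 : ℝ) := by
    have h := congrArg Prod.fst hsum
    simp [Prod.fst_add] at h
    have h2 : ((e₀.1 + e₁.1 + e₂.1 : ℤ) : ℝ) = 0 := by rw [h]; simp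
    push_cast at h2
    linarith
  have h0b : (e₀.2 : ℝ) = -(e₁.2 : ℝ) - (e₂.2 : ℝ) := by
    have h := congrArg Prod.snd hsum
    simp [Prod.snd_add] at h
    have h2 : ((e₀.2 + e₁.2 + e₂.2 : ℤ) : ℝ) = 0 := by rw [h]; simp
    push_cast at h2
    linarith
  -- nonvanishing of the vectors
  have hd : det2 e₁ e₂ ≠ 0 := by
    intro h; rw [h] at habs; simp at habs
  have he1 : e₁ ≠ 0 := by
    intro h; apply hd; rw [h]; simp [det2]
  have he2 : e₂ ≠ 0 := by
    intro h; apply hd; rw [h]; simp [det2]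
  have he0 : e₀ ≠ 0 := by
    intro h
    apply hd
    rw [h] at hsum
    simp at hsum
    have h1 : e₁ = -e₂ := by linear_combination hsum
    rw [h1]; simp [det2]; ring
  have hd0 : 0 < qf M e₀ e₀ := qf_pos M hpos e₀ he0
  have hd1 : 0 < qf M e₁ e₁ := qf_pos M hpos e₁ he1
  have hd2 : 0 < qf M e₂ e₂ := qf_pos M hpos e₂ he2
  -- determinant identity
  have hε : ((det2 e₁ e₂ : ℤ) : ℝ) ^ 2 = 1 := by
    have : (det2 e₁ e₂) ^ 2 = 1 := by
      have := sq_abs (det2 e₁ e₂)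
      rw [habs] at this; linarith [this]
    exact_mod_cast this
  have hdet2 : ((det2 e₁ e₂ : ℤ) : ℝ) = (e₁.1 : ℝ) * e₂.2 - (e₁.2 : ℝ) * e₂.1 := by
    push_cast [det2]; ring
  have hDet : M.det = M 0 0 * M 1 1 - M 0 1 * M 0 1 := by
    rw [Matrix.det_fin_two, hB]
  have key : qf M e₁ e₁ * qf M e₂ e₂ - (qf M e₁ e₂) ^ 2 = M.det := by
    rw [hDet]
    simp only [qf, hB]
    rw [hdet2] at hε
    linear_combination (M 0 0 * M 1 1 - M 0 1 * M 0 1) * hε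
  have hδ₀ : qf M e₀ e₀ = qf M e₁ e₁ + qf M e₂ e₂ + 2 * qf M e₁ e₂ := by
    simp only [qf, hB, h0a, h0b]; ring
  have hβ : qf M e₀ e₂ = -(qf M e₂ e₂) - qf M e₁ e₂ := by
    simp only [qf, hB, h0a, h0b]; ring
  have hγ : qf M e₀ e₁ = -(qf M e₁ e₁) - qf M e₁ e₂ := by
    simp only [qf, hB, h0a, h0b]; ring
  set a := qf M e₀ e₀ with ha
  set b := qf M e₁ e₁ with hb
  set c := qf M e₂ e₂ with hc
  set α := qf M e₁ e₂ with hα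
  unfold hFun IsObtuse
  rw [hγ, hβ]
  split_ifs with h1 h2 h3
  · -- α ≥ 0
    have hα0 : 0 ≤ α := by linarith [hδ₀]
    constructor
    · linarith [sq_nonneg α, key]
    constructor
    · intro heq
      have hα2 : α ^ 2 = 0 := by linarith [key]
      have : α = 0 := by
        have := sq_eq_zero_iff.mp hα2
        exact this
      refine ⟨by linarith, by linarith, by linarith⟩
    · rintro ⟨-, -, h3'⟩
      have : α = 0 := le_antisymm h3' hα0
      nlinarith [key]
  · -- β ≥ 0 case : c + a ≤ b
    have hca : c + α ≤ 0 := by linarith [hδ₀]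
    have hcase : c * a - M.det = (c + α) ^ 2 := by
      rw [hδ₀]; linear_combination key
    constructor
    · linarith [sq_nonneg (c + α), hcase]
    constructor
    · intro heq
      have : (c + α) ^ 2 = 0 := by linarith
      have hc0 : c + α = 0 := sq_eq_zero_iff.mp this
      refine ⟨by linarith [hδ₀], by linarith, by linarith⟩
    · rintro ⟨-, h2', -⟩
      have hc0 : c + α = 0 := by linarith
      have : (c + α) ^ 2 = 0 := by rw [hc0]; ring
      linarith
  · -- γ ≥ 0 case : a + b ≤ c
    have hba : b + α ≤ 0 := by linarith [hδ₀]
    have hcase : a * b - M.det = (b + α) ^ 2 := by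
      rw [hδ₀]; linear_combination key
    constructor
    · linarith [sq_nonneg (b + α), hcase]
    constructor
    · intro heq
      have : (b + α) ^ 2 = 0 := by linarith
      have hb0 : b + α = 0 := sq_eq_zero_iff.mp this
      refine ⟨by linarith, by linarith [hδ₀], by linarith⟩
    · rintro ⟨h1', -, -⟩
      have hb0 : b + α = 0 := by linarith
      have : (b + α) ^ 2 = 0 := by rw [hb0]; ring
      linarith
  · -- interior case: equality always, obtuse always
    have hαneg : α < 0 := by linarith [hδ₀]
    have hβneg : 0 < c + α := by linarith [hδ₀]
    have hγneg : 0 < b + α := by linarith [hδ₀]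
    have hE : (a * b + b * c + c * a) / 2 - (a ^ 2 + b ^ 2 + c ^ 2) / 4 = M.det := by
      rw [hδ₀]; linear_combination key
    refine ⟨le_of_eq hE.symm, ?_⟩
    constructor
    · intro _
      exact ⟨by linarith, by linarith, by linarith⟩
    · intro _; exact hE
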